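/- Let the Σ₂ family {p₀, p₂, p₃, p₄, …} be multiplicatively closed with z² p_j in its ℂ-linear span for every j. Then for every n ≥ 1, in ℂ((z⁻¹)) with λ = z²: p_{2n+1}² = (λ^{n−1} − ∑_{i=0}^{n−2} H^{2(n−i)−1}_{−1} λ^i)² · (λ³ + 2H³₋₁ λ² + ((H³₋₁)² + 2H³₁) λ + 2H³₋₁ H³₁ + 2H³₃); i.e. each pair (λ, p_{2n+1}) satisfies a singular hyperelliptic curve equation of genus 1. -/

import Mathlib

open Finset

noncomputable section

/-- `z^j` viewed as a formal Laurent series in `t = z⁻¹` (so `z^j = t^(-j)`). -/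
def zp (j : ℤ) : LaurentSeries ℂ := HahnSeries.single (-j) 1

/-- The element `p₀ = 1 + ∑_{k ≥ 1} H^0_k z^(-k)` of the `Σ₂` family. -/
def sigma2zero (H : ℕ → ℤ → ℂ) : LaurentSeries ℂ :=
  1 + HahnSeries.ofPowerSeries ℤ ℂ (PowerSeries.mk fun k => if 1 ≤ k then H 0 (k:ℤ) else 0)

/-- The elements `p_j = z^j + H^j_{-1} z + ∑_{k ≥ 1} H^j_k z^(-k)`, `j ≥ 2`, of the `Σ₂`
family. -/
def sigma2 (H : ℕ → ℤ → ℂ) (j : ℕ) : LaurentSeries ℂ :=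
  zp j + H j (-1) • zp 1
    + HahnSeries.ofPowerSeries ℤ ℂ (PowerSeries.mk fun k => if 1 ≤ k then H j (k:ℤ) else 0)

/-- The `Σ₂` family `{p₀, p₂, p₃, p₄, …}` as a set of Laurent series. -/
def sigma2Set (H : ℕ → ℤ → ℂ) : Set (LaurentSeries ℂ) :=
  insert (sigma2zero H) (sigma2 H '' {j | 2 ≤ j})

namespace SigAux
lemma ofPS_coeff (φ : PowerSeries ℂ) (e : ℤ) :
    (HahnSeries.ofPowerSeries ℤ ℂ φ).coeff e
      = if 0 ≤ e then PowerSeries.coeff e.toNat φ else 0 := by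
  split_ifs with h
  · obtain ⟨n, rfl⟩ := Int.eq_ofNat_of_zero_le h
    simpa using HahnSeries.ofPowerSeries_apply_coeff φ n
  · rw [HahnSeries.ofPowerSeries_apply]
    refine HahnSeries.embDomain_notin_range ?_
    rintro ⟨n, hn⟩
    have hn' : ((n:ℕ):ℤ) = e := hn
    omega

variable (H : ℕ → ℤ → ℂ)

/-- the tail power series of `sigma2 H j` (also of `sigma2zero` for `j = 0`). -/
def φs (j : ℕ) : PowerSeries ℂ := PowerSeries.mk fun k => if 1 ≤ k then H j (k:ℤ) else 0

lemma tl_coeff (j : ℕ) (e : ℤ) :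
    (HahnSeries.ofPowerSeries ℤ ℂ (φs H j)).coeff e
      = if 1 ≤ e then H j e else 0 := by
  rw [ofPS_coeff]
  rcases le_or_gt 0 e with h | h
  · obtain ⟨n, rfl⟩ := Int.eq_ofNat_of_zero_le h
    simp only [h, if_true, φs, PowerSeries.coeff_mk, Int.toNat_natCast]
    by_cases h1 : 1 ≤ n
    · simp [h1, show (1:ℤ) ≤ (n:ℤ) by exact_mod_cast h1]
    · simp [h1, show ¬(1:ℤ) ≤ (n:ℤ) by exact_mod_cast h1]
  · simp [not_le.mpr h, show ¬(1:ℤ) ≤ e by omega]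

lemma sigma2_def' (j : ℕ) :
    sigma2 H j = HahnSeries.single (-(j:ℤ)) 1 + H j (-1) • HahnSeries.single (-1:ℤ) (1:ℂ)
      + HahnSeries.ofPowerSeries ℤ ℂ (φs H j) := rfl

lemma sigma2zero_def' :
    sigma2zero H = 1 + HahnSeries.ofPowerSeries ℤ ℂ (φs H 0) := rfl

lemma sigma2_coeff (j : ℕ) (e : ℤ) :
    (sigma2 H j).coeff e
      = (if e = -(j:ℤ) then 1 else 0) + (if e = -1 then H j (-1) else 0)
        + (if 1 ≤ e then H j e else 0) := by
  rw [sigma2_def', HahnSeries.coeff_add, HahnSeries.coeff_add, tl_coeff,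
    HahnSeries.coeff_smul, HahnSeries.coeff_single, HahnSeries.coeff_single]
  split_ifs <;> simp

lemma sigma2zero_coeff (e : ℤ) :
    (sigma2zero H).coeff e
      = (if e = 0 then 1 else 0) + (if 1 ≤ e then H 0 e else 0) := by
  rw [sigma2zero_def', HahnSeries.coeff_add, tl_coeff, HahnSeries.coeff_one]
  split_ifs <;> simp

/-- the indexed family spanning `sigma2Set`. -/
def q : ℕ → LaurentSeries ℂ
  | 0 => sigma2zero H
  | 1 => 0
  | (n+2) => sigma2 H (n+2)

lemma q_of_two_le {i : ℕ} (hi : 2 ≤ i) : q H i = sigma2 H i := by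
  match i, hi with
  | (n+2), _ => rfl

lemma q_coeff_neg (i : ℕ) {j : ℕ} (hj : 2 ≤ j) :
    (q H i).coeff (-(j:ℤ)) = if i = j then 1 else 0 := by
  match i with
  | 0 =>
    rw [q, sigma2zero_coeff]
    have : ¬ (0:ℕ) = j := by omega
    simp only [this, if_false]
    have h1 : ¬ (-(j:ℤ) = 0) := by omega
    have h2 : ¬ ((1:ℤ) ≤ -(j:ℤ)) := by omega
    simp [h1, h2]
  | 1 =>
    have : ¬ (1:ℕ) = j := by omega
    simp [q, this]
  | (n+2) =>
    rw [q, sigma2_coeff]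
    have h2 : ¬ (-(j:ℤ) = -1) := by omega
    have h3 : ¬ ((1:ℤ) ≤ -(j:ℤ)) := by omega
    simp only [h2, if_false, h3, add_zero]
    by_cases h : n + 2 = j
    · simp [h]
    · rw [if_neg (by push_cast; omega), if_neg h]

lemma q_coeff_zero (i : ℕ) : (q H i).coeff 0 = if i = 0 then 1 else 0 := by
  match i with
  | 0 => rw [q, sigma2zero_coeff]; norm_num
  | 1 => simp [q]
  | (n+2) =>
    rw [q, sigma2_coeff]
    rw [if_neg (by push_cast; omega)]
    norm_num

variable {H}

lemma subset_range : sigma2Set H ⊆ Set.range (q H) := by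
  rintro y (rfl | ⟨j, hj, rfl⟩)
  · exact ⟨0, rfl⟩
  · exact ⟨j, q_of_two_le H hj⟩

def coeffL (e : ℤ) : LaurentSeries ℂ →ₗ[ℂ] ℂ where
  toFun x := x.coeff e
  map_add' _ _ := HahnSeries.coeff_add
  map_smul' _ _ := HahnSeries.coeff_smul

@[simp] lemma coeffL_apply (e : ℤ) (x : LaurentSeries ℂ) : coeffL e x = x.coeff e := rfl

lemma master {x : LaurentSeries ℂ} (hx : x ∈ Submodule.span ℂ (sigma2Set H)) (M₀ : ℕ) :
    ∃ M, M₀ ≤ M ∧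
      x = x.coeff 0 • sigma2zero H
        + ∑ i ∈ range M, x.coeff (-(i:ℤ)-2) • sigma2 H (i+2) := by
  have hx' : x ∈ Submodule.span ℂ (Set.range (q H)) :=
    Submodule.span_mono subset_range hx
  obtain ⟨c, hc⟩ := Finsupp.mem_span_range_iff_exists_finsupp.mp hx'
  have hsum : ∀ e : ℤ, x.coeff e = ∑ i ∈ c.support, c i * (q H i).coeff e := by
    intro e
    rw [← hc]
    have : (c.sum fun i a => a • q H i) = ∑ i ∈ c.support, c i • q H i := rfl
    rw [this, ← coeffL_apply e, map_sum]
    simp [smul_eq_mul]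
  have hkey : ∀ j : ℕ, 2 ≤ j → c j = x.coeff (-(j:ℤ)) := by
    intro j hj
    rw [hsum]
    rw [Finset.sum_congr rfl (fun i _ => by rw [q_coeff_neg H i hj])]
    simp only [mul_ite, mul_one, mul_zero]
    rw [Finset.sum_ite_eq' c.support j (fun i => c i)]
    split_ifs with h
    · rfl
    · exact Finsupp.notMem_support_iff.mp h
  have hzero : c 0 = x.coeff 0 := by
    rw [hsum]
    rw [Finset.sum_congr rfl (fun i _ => by rw [q_coeff_zero H i])]
    simp only [mul_ite, mul_one, mul_zero]
    rw [Finset.sum_ite_eq' c.support 0 (fun i => c i)]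
    split_ifs with h
    · rfl
    · exact Finsupp.notMem_support_iff.mp h
  set M := max M₀ (c.support.sup id) with hM
  refine ⟨M, le_max_left _ _, ?_⟩
  have hsupp : c.support ⊆ range (M + 2) := by
    intro i hi
    simp only [Finset.mem_range]
    have : i ≤ c.support.sup id := Finset.le_sup (f := id) hi
    omega
  have hrw : x = ∑ i ∈ range (M + 2), c i • q H i := by
    rw [← hc]
    show ∑ i ∈ c.support, c i • q H i = _
    exact Finset.sum_subset hsupp (fun i _ hi => by
      rw [Finsupp.notMem_support_iff.mp hi]; exact zero_smul ℂ (q H i))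
  conv_lhs => rw [hrw]
  rw [Finset.sum_range_succ' _ (M+1), Finset.sum_range_succ' _ M]
  have hq1 : c 1 • q H 1 = 0 := by simp [q]
  rw [hq1, add_zero, hzero]
  have : (fun i => c (i+1+1) • q H (i+1+1)) = fun (i : ℕ) => x.coeff (-(i:ℤ)-2) • sigma2 H (i+2) := by
    funext i
    have h2 : 2 ≤ i + 1 + 1 := by omega
    rw [hkey _ h2, q_of_two_le H h2]
    have e1 : (-(((i+1+1:ℕ)):ℤ)) = -(i:ℤ)-2 := by push_cast; ring
    rw [e1]
  rw [Finset.sum_congr rfl (fun i _ => congrFun this i)]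
  show _ + x.coeff 0 • q H 0 = _
  rw [show q H 0 = sigma2zero H from rfl, add_comm]


variable (H)

lemma mem0 : sigma2zero H ∈ sigma2Set H := Set.mem_insert _ _

lemma memj {j : ℕ} (hj : 2 ≤ j) : sigma2 H j ∈ sigma2Set H :=
  Set.mem_insert_of_mem _ ⟨j, hj, rfl⟩

lemma smul_eq_C_mul (c : ℂ) (x : LaurentSeries ℂ) : c • x = HahnSeries.C c * x := by
  rw [← HahnSeries.single_zero_mul_eq_smul]; rfl

lemma smul_one_eq_C (c : ℂ) : c • (1 : LaurentSeries ℂ) = HahnSeries.C c := by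
  rw [smul_eq_C_mul, mul_one]

lemma single_neg_mul_coeff (m : ℤ) (x : LaurentSeries ℂ) (e : ℤ) :
    (HahnSeries.single (-m) (1:ℂ) * x).coeff e = x.coeff (e + m) := by
  have := HahnSeries.coeff_single_mul_add (r := (1:ℂ)) (x := x) (a := e + m) (b := -m)
  simpa using this

lemma zp2_mul_coeff (x : LaurentSeries ℂ) (e : ℤ) :
    (zp 2 * x).coeff e = x.coeff (e + 2) := by
  exact single_neg_mul_coeff 2 x e

lemma sum_ite_smul (M b : ℕ) (hb : b ∈ range M) (a : ℂ) (g : ℕ → LaurentSeries ℂ) :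
    ∑ i ∈ range M, (if i = b then a else 0) • g i = a • g b := by
  have h : ∀ i, (if i = b then a else 0) • g i = if i = b then a • g i else 0 := by
    intro i; split_ifs with h
    · rfl
    · exact zero_smul ℂ (g i)
  rw [Finset.sum_congr rfl fun i _ => h i,
    Finset.sum_ite_eq' (range M) b (fun i => a • g i), if_pos hb]

variable {H}

lemma p0_eq_one
    (hmul : ∀ x ∈ sigma2Set H, ∀ y ∈ sigma2Set H, x * y ∈ Submodule.span ℂ (sigma2Set H)) :
    sigma2zero H = 1 := by
  have hx := hmul _ (mem0 H) _ (mem0 H)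
  obtain ⟨M, hM, hrep⟩ := master hx 0
  set O := HahnSeries.ofPowerSeries ℤ ℂ (φs H 0) with hO
  have hexp : sigma2zero H * sigma2zero H = 1 + (O + O + O * O) := by
    rw [sigma2zero_def']; ring
  have hOO : O * O = HahnSeries.ofPowerSeries ℤ ℂ (φs H 0 * φs H 0) :=
    (map_mul (HahnSeries.ofPowerSeries ℤ ℂ) _ _).symm
  have hOc : ∀ e : ℤ, e ≤ 0 → O.coeff e = 0 := by
    intro e he
    rw [hO, tl_coeff, if_neg (by omega)]
  have hneg : ∀ e : ℤ, e ≤ -1 → (sigma2zero H * sigma2zero H).coeff e = 0 := by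
    intro e he
    rw [hexp, HahnSeries.coeff_add, HahnSeries.coeff_add, HahnSeries.coeff_add,
      HahnSeries.coeff_one, if_neg (by omega), hOc e (by omega), hOO, ofPS_coeff,
      if_neg (by omega)]
    ring
  have h00 : (sigma2zero H * sigma2zero H).coeff 0 = 1 := by
    rw [hexp, HahnSeries.coeff_add, HahnSeries.coeff_add, HahnSeries.coeff_add,
      HahnSeries.coeff_one, if_pos rfl, hOc 0 le_rfl, hOO, ofPS_coeff, if_pos le_rfl]
    have : (PowerSeries.coeff 0) (φs H 0 * φs H 0) = 0 := by
      rw [PowerSeries.coeff_mul]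
      simp [φs]
    norm_num [this]
  have hP0P0 : sigma2zero H * sigma2zero H = sigma2zero H := by
    rw [hrep, h00, one_smul]
    have : ∑ i ∈ range M, (sigma2zero H * sigma2zero H).coeff (-(i:ℤ)-2) • sigma2 H (i+2)
        = 0 := by
      refine Finset.sum_eq_zero fun i _ => ?_
      rw [hneg _ (by omega)]
      exact zero_smul ℂ (sigma2 H (i+2))
    rw [this, add_zero]
  have hne : sigma2zero H ≠ 0 := by
    intro h
    have := sigma2zero_coeff H 0
    rw [h] at this
    simp at this
  exact mul_left_cancel₀ hne (by rw [mul_one, hP0P0])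

lemma p2_eq (h0 : sigma2zero H = 1)
    (hz2 : ∀ x ∈ sigma2Set H, zp 2 * x ∈ Submodule.span ℂ (sigma2Set H)) :
    sigma2 H 2 = zp 2 := by
  have hx := hz2 _ (mem0 H)
  rw [h0, mul_one] at hx
  obtain ⟨M, hM, hrep⟩ := master hx 1
  have hc0 : (zp 2 : LaurentSeries ℂ).coeff 0 = 0 := by
    rw [zp, HahnSeries.coeff_single, if_neg (by norm_num)]
  have hs : ∀ i : ℕ, (zp 2 : LaurentSeries ℂ).coeff (-(i:ℤ)-2) = if i = 0 then 1 else 0 := by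
    intro i
    rw [zp, HahnSeries.coeff_single]
    by_cases h : i = 0
    · subst h; norm_num
    · rw [if_neg (by omega), if_neg h]
  have z1 : (0:ℂ) • sigma2zero H = 0 := zero_smul ℂ (sigma2zero H)
  have hsplit : ∀ i : ℕ, (zp 2 : LaurentSeries ℂ).coeff (-(i:ℤ)-2) • sigma2 H (i+2)
      = (if i = 0 then (1:ℂ) else 0) • sigma2 H (i+2) := fun i => by rw [hs i]
  rw [hc0, z1, zero_add, Finset.sum_congr rfl (fun i _ => hsplit i),
    sum_ite_smul M 0 (Finset.mem_range.mpr (by omega)) 1 (fun i => sigma2 H (i+2)),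
    one_smul] at hrep
  exact hrep.symm

lemma recursion (h0 : sigma2zero H = 1)
    (hz2 : ∀ x ∈ sigma2Set H, zp 2 * x ∈ Submodule.span ℂ (sigma2Set H))
    {j : ℕ} (hj : 2 ≤ j) :
    sigma2 H (j+2)
      = zp 2 * sigma2 H j - H j (-1) • sigma2 H 3 - HahnSeries.C (H j 2) := by
  have hx := hz2 _ (memj H hj)
  obtain ⟨M, hM, hrep⟩ := master hx (j+1)
  have hc : ∀ e : ℤ, (zp 2 * sigma2 H j).coeff e = (sigma2 H j).coeff (e+2) :=
    zp2_mul_coeff _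
  have hc0 : (zp 2 * sigma2 H j).coeff 0 = H j 2 := by
    rw [hc, show ((0:ℤ)+2) = 2 by norm_num, sigma2_coeff,
      if_neg (show ¬((2:ℤ) = -(j:ℤ)) by omega),
      if_neg (show ¬((2:ℤ) = -1) by norm_num),
      if_pos (show (1:ℤ) ≤ 2 by norm_num)]
    ring
  have hs : ∀ i : ℕ, (zp 2 * sigma2 H j).coeff (-(i:ℤ)-2)
      = (if i = j then 1 else 0) + (if i = 1 then H j (-1) else 0) := by
    intro i
    rw [hc, show (-(i:ℤ)-2+2 : ℤ) = -(i:ℤ) by ring, sigma2_coeff,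
      if_neg (show ¬((1:ℤ) ≤ -(i:ℤ)) by omega), add_zero]
    congr 1
    · by_cases h : i = j
      · subst h; simp
      · rw [if_neg (by omega), if_neg h]
    · by_cases h : i = 1
      · subst h; norm_num
      · rw [if_neg (by omega), if_neg h]
  have hsplit : ∀ i : ℕ, (zp 2 * sigma2 H j).coeff (-(i:ℤ)-2) • sigma2 H (i+2)
      = (if i = j then (1:ℂ) else 0) • sigma2 H (i+2)
        + (if i = 1 then H j (-1) else 0) • sigma2 H (i+2) := by
    intro i
    rw [hs i]
    exact add_smul (if i = j then (1:ℂ) else 0) (if i = 1 then H j (-1) else 0) (sigma2 H (i+2))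
  rw [hc0, h0, smul_one_eq_C, Finset.sum_congr rfl (fun i _ => hsplit i),
    Finset.sum_add_distrib,
    sum_ite_smul M j (Finset.mem_range.mpr (by omega)) 1 (fun i => sigma2 H (i+2)),
    sum_ite_smul M 1 (Finset.mem_range.mpr (by omega)) (H j (-1)) (fun i => sigma2 H (i+2)),
    one_smul] at hrep
  rw [hrep]
  abel

lemma zp2_pow (n : ℕ) : (zp 2 : LaurentSeries ℂ) ^ n = HahnSeries.single (-(2*(n:ℤ))) 1 := by
  rw [zp, HahnSeries.single_pow]
  norm_num
  congr 1
  push_cast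
  ring

lemma sigma2_coeff_neg_one {j : ℕ} (hj : 2 ≤ j) :
    (sigma2 H j).coeff (-1) = H j (-1) := by
  rw [sigma2_coeff, if_neg (by omega), if_pos rfl, if_neg (by omega)]
  ring

lemma sigma2_coeff_pos (j : ℕ) {k : ℤ} (hk : 1 ≤ k) :
    (sigma2 H j).coeff k = H j k := by
  rw [sigma2_coeff, if_neg (by omega), if_neg (by omega), if_pos hk]
  ring

lemma even_pow (h0 : sigma2zero H = 1)
    (hz2 : ∀ x ∈ sigma2Set H, zp 2 * x ∈ Submodule.span ℂ (sigma2Set H)) :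
    ∀ n : ℕ, 1 ≤ n → sigma2 H (2*n) = zp 2 ^ n := by
  intro n hn
  induction n, hn using Nat.le_induction with
  | base => rw [pow_one]; exact p2_eq h0 hz2
  | succ n hn ih =>
    have hrec := recursion h0 hz2 (j := 2*n) (by omega)
    have e1 : H (2*n) (-1) = 0 := by
      rw [← sigma2_coeff_neg_one (H := H) (by omega : 2 ≤ 2*n), ih, zp2_pow,
        HahnSeries.coeff_single, if_neg (by omega)]
    have e2 : H (2*n) 2 = 0 := by
      rw [← sigma2_coeff_pos (H := H) (2*n) (by norm_num : (1:ℤ) ≤ 2), ih, zp2_pow,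
        HahnSeries.coeff_single, if_neg (by omega)]
    have : sigma2 H (2*(n+1)) = sigma2 H (2*n+2) := by norm_num; ring_nf
    have z := zero_smul ℂ (sigma2 H 3)
    rw [this, hrec, e1, e2, ih, map_zero, sub_zero, z, sub_zero, pow_succ]
    ring

lemma C_mul_coeff (r : ℂ) (y : LaurentSeries ℂ) (e : ℤ) :
    (HahnSeries.C r * y).coeff e = r * y.coeff e := by
  rw [← smul_eq_C_mul]
  exact HahnSeries.coeff_smul

/-- full coefficient formula for `p₃ * p₃`. -/
lemma p3sq_coeff (e : ℤ) :
    (sigma2 H 3 * sigma2 H 3).coeff e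
      = (if e = -6 then 1 else 0)
        + 2 * H 3 (-1) * (if e = -4 then 1 else 0)
        + H 3 (-1) * H 3 (-1) * (if e = -2 then 1 else 0)
        + 2 * (if 1 ≤ e + 3 then H 3 (e+3) else 0)
        + 2 * H 3 (-1) * (if 1 ≤ e + 1 then H 3 (e+1) else 0)
        + (HahnSeries.ofPowerSeries ℤ ℂ (φs H 3 * φs H 3)).coeff e := by
  set a := H 3 (-1)
  set s3 : LaurentSeries ℂ := HahnSeries.single (-3 : ℤ) 1 with hs3
  set s1 : LaurentSeries ℂ := HahnSeries.single (-1 : ℤ) 1 with hs1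
  set T : LaurentSeries ℂ := HahnSeries.ofPowerSeries ℤ ℂ (φs H 3) with hT
  have hdef : sigma2 H 3 = s3 + HahnSeries.C a * s1 + T := by
    rw [sigma2_def', ← smul_eq_C_mul]
    norm_num [zp]
    rfl
  have hexpand : sigma2 H 3 * sigma2 H 3
      = s3 * s3 + (HahnSeries.C a * (s3 * s1) + HahnSeries.C a * (s3 * s1))
        + HahnSeries.C a * (HahnSeries.C a * (s1 * s1))
        + (s3 * T + s3 * T)
        + (HahnSeries.C a * (s1 * T) + HahnSeries.C a * (s1 * T))
        + T * T := by
    rw [hdef]; ring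
  have h33 : s3 * s3 = HahnSeries.single (-6 : ℤ) 1 := by
    rw [hs3, HahnSeries.single_mul_single]; norm_num
  have h31 : s3 * s1 = HahnSeries.single (-4 : ℤ) 1 := by
    rw [hs3, hs1, HahnSeries.single_mul_single]; norm_num
  have h11 : s1 * s1 = HahnSeries.single (-2 : ℤ) 1 := by
    rw [hs1, HahnSeries.single_mul_single]; norm_num
  have hTT : T * T = HahnSeries.ofPowerSeries ℤ ℂ (φs H 3 * φs H 3) :=
    (map_mul (HahnSeries.ofPowerSeries ℤ ℂ) _ _).symm
  have h3T : (s3 * T).coeff e = (if 1 ≤ e + 3 then H 3 (e+3) else 0) := by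
    rw [hs3, show (-3 : ℤ) = -(3:ℤ) by norm_num, single_neg_mul_coeff, hT, tl_coeff]
  have h1T : (s1 * T).coeff e = (if 1 ≤ e + 1 then H 3 (e+1) else 0) := by
    rw [hs1, show (-1 : ℤ) = -(1:ℤ) by norm_num, single_neg_mul_coeff, hT, tl_coeff]
  rw [hexpand]
  simp only [HahnSeries.coeff_add, C_mul_coeff, h33, h31, h11, hTT, h3T, h1T,
    HahnSeries.coeff_single]
  ring

lemma p3_sq (h0 : sigma2zero H = 1)
    (hmul : ∀ x ∈ sigma2Set H, ∀ y ∈ sigma2Set H, x * y ∈ Submodule.span ℂ (sigma2Set H))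
    (hz2 : ∀ x ∈ sigma2Set H, zp 2 * x ∈ Submodule.span ℂ (sigma2Set H)) :
    sigma2 H 3 ^ 2
      = zp 2 ^ 3 + (2 * H 3 (-1)) • zp 2 ^ 2
          + ((H 3 (-1))^2 + 2 * H 3 1) • zp 2
          + HahnSeries.C (2 * H 3 (-1) * H 3 1 + 2 * H 3 3) := by
  have hx := hmul _ (memj H (by norm_num : 2 ≤ 3)) _ (memj H (by norm_num : 2 ≤ 3))
  obtain ⟨M, hM, hrep⟩ := master hx 5
  have hprod : ∀ e : ℤ,
      ((HahnSeries.ofPowerSeries ℤ ℂ (φs H 3)) * (HahnSeries.ofPowerSeries ℤ ℂ (φs H 3))).coeff e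
        = if 0 ≤ e then PowerSeries.coeff e.toNat (φs H 3 * φs H 3) else 0 := by
    intro e
    rw [← map_mul, ofPS_coeff]
  have hc0 : (sigma2 H 3 * sigma2 H 3).coeff 0 = 2 * H 3 (-1) * H 3 1 + 2 * H 3 3 := by
    rw [p3sq_coeff, ofPS_coeff, if_pos le_rfl]
    have : (PowerSeries.coeff (Int.toNat 0)) (φs H 3 * φs H 3) = 0 := by
      rw [Int.toNat_zero, PowerSeries.coeff_mul]
      simp [φs]
    rw [this]
    norm_num
    try ring
  have hs : ∀ i : ℕ, (sigma2 H 3 * sigma2 H 3).coeff (-(i:ℤ)-2)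
      = (if i = 4 then 1 else 0) + (if i = 2 then 2 * H 3 (-1) else 0)
        + (if i = 0 then (H 3 (-1))^2 + 2 * H 3 1 else 0) := by
    intro i
    match i with
    | 0 =>
      rw [p3sq_coeff, ofPS_coeff]
      norm_num
      try ring
    | 1 =>
      rw [p3sq_coeff, ofPS_coeff]
      norm_num
      try ring
    | 2 =>
      rw [p3sq_coeff, ofPS_coeff]
      norm_num
      try ring
    | 3 =>
      rw [p3sq_coeff, ofPS_coeff]
      norm_num
      try ring
    | 4 =>
      rw [p3sq_coeff, ofPS_coeff]
      norm_num
      try ring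
    | (m+5) =>
      rw [p3sq_coeff, ofPS_coeff]
      rw [if_neg (by push_cast; omega), if_neg (by push_cast; omega),
        if_neg (by push_cast; omega), if_neg (by push_cast; omega),
        if_neg (by push_cast; omega), if_neg (by push_cast; omega),
        if_neg (by omega), if_neg (by omega), if_neg (by omega)]
      ring
  have hsplit : ∀ i : ℕ, (sigma2 H 3 * sigma2 H 3).coeff (-(i:ℤ)-2) • sigma2 H (i+2)
      = (if i = 4 then (1:ℂ) else 0) • sigma2 H (i+2)
        + (if i = 2 then 2 * H 3 (-1) else 0) • sigma2 H (i+2)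
        + (if i = 0 then (H 3 (-1))^2 + 2 * H 3 1 else 0) • sigma2 H (i+2) := by
    intro i
    have e1 := add_smul ((if i = 4 then (1:ℂ) else 0) + (if i = 2 then 2 * H 3 (-1) else 0))
      (if i = 0 then (H 3 (-1))^2 + 2 * H 3 1 else 0) (sigma2 H (i+2))
    have e2 := add_smul (if i = 4 then (1:ℂ) else 0) (if i = 2 then 2 * H 3 (-1) else 0)
      (sigma2 H (i+2))
    rw [hs i, e1, e2]
  rw [hc0, h0, smul_one_eq_C, Finset.sum_congr rfl (fun i _ => hsplit i),
    Finset.sum_add_distrib, Finset.sum_add_distrib,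
    sum_ite_smul M 4 (Finset.mem_range.mpr (by omega)) 1 (fun i => sigma2 H (i+2)),
    sum_ite_smul M 2 (Finset.mem_range.mpr (by omega)) (2 * H 3 (-1)) (fun i => sigma2 H (i+2)),
    sum_ite_smul M 0 (Finset.mem_range.mpr (by omega)) ((H 3 (-1))^2 + 2 * H 3 1)
      (fun i => sigma2 H (i+2)),
    one_smul] at hrep
  have h6 : sigma2 H (4+2) = zp 2 ^ 3 := by
    rw [show (4+2 : ℕ) = 2*3 by norm_num]
    exact even_pow h0 hz2 3 (by norm_num)
  have h4 : sigma2 H (2+2) = zp 2 ^ 2 := by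
    rw [show (2+2 : ℕ) = 2*2 by norm_num]
    exact even_pow h0 hz2 2 (by norm_num)
  have h2 : sigma2 H (0+2) = zp 2 := by
    rw [show (0+2 : ℕ) = 2 by norm_num]
    exact p2_eq h0 hz2
  rw [h6, h4, h2] at hrep
  rw [pow_two, hrep]
  abel

lemma h3_even (h0 : sigma2zero H = 1)
    (hmul : ∀ x ∈ sigma2Set H, ∀ y ∈ sigma2Set H, x * y ∈ Submodule.span ℂ (sigma2Set H))
    (hz2 : ∀ x ∈ sigma2Set H, zp 2 * x ∈ Submodule.span ℂ (sigma2Set H)) :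
    ∀ m : ℕ, H 3 ((2*m+2 : ℕ) : ℤ) = 0 := by
  have hps := p3_sq h0 hmul hz2
  set R : LaurentSeries ℂ := zp 2 ^ 3 + (2 * H 3 (-1)) • zp 2 ^ 2
      + ((H 3 (-1))^2 + 2 * H 3 1) • zp 2
      + HahnSeries.C (2 * H 3 (-1) * H 3 1 + 2 * H 3 3) with hR
  have hcoeq : ∀ e : ℤ, (sigma2 H 3 * sigma2 H 3).coeff e = R.coeff e := by
    intro e
    rw [← pow_two, hps]
  have hrco : ∀ e : ℤ, e ≠ -6 → e ≠ -4 → e ≠ -2 → e ≠ 0 → R.coeff e = 0 := by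
    intro e h6 h4 h2 hz
    rw [hR, zp2_pow 3, zp2_pow 2]
    simp only [zp, HahnSeries.C_apply, HahnSeries.coeff_add, HahnSeries.coeff_smul,
      smul_eq_mul, HahnSeries.coeff_single]
    rw [if_neg (by push_cast; omega), if_neg (by push_cast; omega),
      if_neg (by push_cast; omega), if_neg (by push_cast; omega)]
    ring
  have hm1 : H 3 2 = 0 := by
    have := hcoeq (-1)
    rw [hrco (-1) (by omega) (by omega) (by omega) (by omega), p3sq_coeff, ofPS_coeff] at this
    norm_num at this
    exact this
  have hrel : ∀ k : ℕ, 1 ≤ k →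
      2 * H 3 ((k:ℤ)+3) + 2 * H 3 (-1) * H 3 ((k:ℤ)+1)
        + ∑ p ∈ Finset.HasAntidiagonal.antidiagonal k,
            (if 1 ≤ p.1 then H 3 (p.1:ℤ) else 0) * (if 1 ≤ p.2 then H 3 (p.2:ℤ) else 0) = 0 := by
    intro k hk
    have := hcoeq (k:ℤ)
    rw [hrco (k:ℤ) (by omega) (by omega) (by omega) (by omega), p3sq_coeff, ofPS_coeff,
      if_neg (by omega), if_neg (by omega), if_neg (by omega),
      if_pos (by omega : (1:ℤ) ≤ (k:ℤ)+3), if_pos (by omega : (1:ℤ) ≤ (k:ℤ)+1),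
      if_pos (by omega : (0:ℤ) ≤ (k:ℤ))] at this
    rw [Int.toNat_natCast, PowerSeries.coeff_mul] at this
    simp only [φs, PowerSeries.coeff_mk] at this
    linear_combination this

  intro m
  induction m using Nat.strong_induction_on with
  | _ m ih =>
    match m with
    | 0 =>
      rw [show ((2*0+2 : ℕ) : ℤ) = 2 by norm_num]
      exact hm1
    | (m'+1) =>
      have hk := hrel (2*m'+1) (by omega)
      have hsum : ∑ p ∈ Finset.HasAntidiagonal.antidiagonal (2*m'+1),
          (if 1 ≤ p.1 then H 3 (p.1:ℤ) else 0) * (if 1 ≤ p.2 then H 3 (p.2:ℤ) else 0) = 0 := by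
        refine Finset.sum_eq_zero fun p hp => ?_
        rw [Finset.HasAntidiagonal.mem_antidiagonal] at hp
        rcases Nat.even_or_odd p.1 with ⟨c, hc⟩ | hodd
        · match c, hc with
          | 0, hc => rw [hc]; norm_num
          | (c'+1), hc =>
            have hlt : c' < m' + 1 := by omega
            have hcast : ((p.1 : ℕ) : ℤ) = ((2*c'+2 : ℕ) : ℤ) := by
              push_cast; omega
            rw [if_pos (by omega), hcast, ih c' hlt, zero_mul]
        · have hev : ∃ c, p.2 = c + c := by
            obtain ⟨a, ha⟩ := hodd
            exact ⟨(p.2)/2, by omega⟩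
          obtain ⟨c, hc⟩ := hev
          match c, hc with
          | 0, hc => rw [hc]; norm_num
          | (c'+1), hc =>
            have hlt : c' < m' + 1 := by
              obtain ⟨a, ha⟩ := hodd
              omega
            have hcast : ((p.2 : ℕ) : ℤ) = ((2*c'+2 : ℕ) : ℤ) := by
              push_cast; omega
            rw [if_pos (show 1 ≤ p.2 by omega), hcast, ih c' hlt, mul_zero]
      have hprev : H 3 (((2*m'+1 : ℕ):ℤ)+1) = 0 := by
        rw [show (((2*m'+1 : ℕ):ℤ)+1) = ((2*m'+2 : ℕ):ℤ) by push_cast; ring]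
        exact ih m' (by omega)
      rw [hsum, hprev, mul_zero, add_zero, add_zero] at hk
      have hfin : H 3 (((2*m'+1 : ℕ):ℤ)+3) = 0 := by
        rcases mul_eq_zero.mp hk with h | h
        · norm_num at h
        · exact h
      rw [show ((2*(m'+1)+2 : ℕ):ℤ) = ((2*m'+1 : ℕ):ℤ)+3 by push_cast; ring]
      exact hfin

lemma p3_coeff_even_pos (h0 : sigma2zero H = 1)
    (hmul : ∀ x ∈ sigma2Set H, ∀ y ∈ sigma2Set H, x * y ∈ Submodule.span ℂ (sigma2Set H))
    (hz2 : ∀ x ∈ sigma2Set H, zp 2 * x ∈ Submodule.span ℂ (sigma2Set H)) (i : ℕ) :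
    (sigma2 H 3).coeff (2 + 2*(i:ℤ)) = 0 := by
  rw [sigma2_coeff_pos 3 (by omega)]
  rw [show ((2:ℤ) + 2*(i:ℤ)) = ((2*i+2 : ℕ):ℤ) by push_cast; ring]
  exact h3_even h0 hmul hz2 i

lemma odd_eq (h0 : sigma2zero H = 1)
    (hmul : ∀ x ∈ sigma2Set H, ∀ y ∈ sigma2Set H, x * y ∈ Submodule.span ℂ (sigma2Set H))
    (hz2 : ∀ x ∈ sigma2Set H, zp 2 * x ∈ Submodule.span ℂ (sigma2Set H)) :
    ∀ n : ℕ, 1 ≤ n →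
      sigma2 H (2*n+1)
        = (zp 2 ^ (n-1) - ∑ i ∈ range (n-1), H (2*(n-i)-1) (-1) • zp 2 ^ i) * sigma2 H 3 := by
  intro n hn
  induction n, hn using Nat.le_induction with
  | base => simp
  | succ n hn ih =>
    have hAco : ∀ k : ℕ, ((zp 2 : LaurentSeries ℂ) ^ k * sigma2 H 3).coeff 2 = 0 := by
      intro k
      rw [zp2_pow, single_neg_mul_coeff]
      exact p3_coeff_even_pos h0 hmul hz2 k
    have hH2 : H (2*n+1) 2 = 0 := by
      rw [← sigma2_coeff_pos (H := H) (2*n+1) (by norm_num : (1:ℤ) ≤ 2), ih]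
      rw [sub_mul, HahnSeries.coeff_sub, hAco (n-1), Finset.sum_mul]
      rw [show ((∑ i ∈ range (n-1), (H (2*(n-i)-1) (-1) • (zp 2:LaurentSeries ℂ) ^ i) * sigma2 H 3).coeff 2)
          = coeffL 2 (∑ i ∈ range (n-1), (H (2*(n-i)-1) (-1) • (zp 2:LaurentSeries ℂ) ^ i) * sigma2 H 3) from rfl]
      rw [map_sum]
      have : ∀ i ∈ range (n-1),
          coeffL 2 ((H (2*(n-i)-1) (-1) • (zp 2:LaurentSeries ℂ) ^ i) * sigma2 H 3) = 0 := by
        intro i _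
        rw [smul_eq_C_mul, mul_assoc, coeffL_apply, C_mul_coeff, hAco i, mul_zero]
      rw [Finset.sum_congr rfl this, Finset.sum_const_zero, sub_zero]
    have hrec := recursion h0 hz2 (j := 2*n+1) (by omega)
    rw [hH2, map_zero, sub_zero, ih] at hrec
    have hB : (zp 2 ^ ((n+1)-1) - ∑ i ∈ range ((n+1)-1), H (2*((n+1)-i)-1) (-1) • (zp 2:LaurentSeries ℂ) ^ i)
        = zp 2 * (zp 2 ^ (n-1) - ∑ i ∈ range (n-1), H (2*(n-i)-1) (-1) • (zp 2:LaurentSeries ℂ) ^ i)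
          - HahnSeries.C (H (2*n+1) (-1)) := by
      obtain ⟨k, rfl⟩ : ∃ k, n = k+1 := ⟨n-1, by omega⟩
      simp only [Nat.add_sub_cancel]
      rw [Finset.sum_range_succ' (fun i => H (2*((k+1+1)-i)-1) (-1) • (zp 2:LaurentSeries ℂ) ^ i) k]
      have hterm : ∀ i : ℕ, H (2*((k+1+1)-(i+1))-1) (-1) • (zp 2:LaurentSeries ℂ) ^ (i+1)
          = H (2*((k+1)-i)-1) (-1) • (zp 2 * (zp 2:LaurentSeries ℂ) ^ i) := by
        intro i
        rw [show (k+1+1)-(i+1) = (k+1)-i by omega, pow_succ']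
      rw [Finset.sum_congr rfl (fun i _ => hterm i)]
      rw [mul_sub, Finset.mul_sum]
      have hc : ∀ i ∈ range k, zp 2 * (H (2*((k+1)-i)-1) (-1) • (zp 2:LaurentSeries ℂ) ^ i)
          = H (2*((k+1)-i)-1) (-1) • (zp 2 * (zp 2:LaurentSeries ℂ) ^ i) := by
        intro i _
        rw [smul_eq_C_mul, smul_eq_C_mul]
        ring
      rw [Finset.sum_congr rfl hc, show (2*((k+1+1)-0)-1) = 2*(k+1)+1 by omega, pow_zero,
        smul_one_eq_C, ← pow_succ']
      abel
    rw [show 2*(n+1)+1 = (2*n+1)+2 by ring, hrec, hB, smul_eq_C_mul]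
    ring

end SigAux

open Finset in
/-- Each pair `(λ, p_{2n+1})`, `λ = z²`, satisfies a singular hyperelliptic curve
equation of genus `1`. -/
theorem sigma2_singular_hyperelliptic (H : ℕ → ℤ → ℂ)
    (hmul : ∀ x ∈ sigma2Set H, ∀ y ∈ sigma2Set H, x * y ∈ Submodule.span ℂ (sigma2Set H))
    (hz2 : ∀ x ∈ sigma2Set H, zp 2 * x ∈ Submodule.span ℂ (sigma2Set H)) :
    ∀ n : ℕ, 1 ≤ n →
      sigma2 H (2*n+1) ^ 2
        = (zp 2 ^ (n-1) - ∑ i ∈ range (n-1), H (2*(n-i)-1) (-1) • zp 2 ^ i) ^ 2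
          * (zp 2 ^ 3 + (2 * H 3 (-1)) • zp 2 ^ 2
              + ((H 3 (-1))^2 + 2 * H 3 1) • zp 2
              + HahnSeries.C (2 * H 3 (-1) * H 3 1 + 2 * H 3 3)) := by
  have h0 := SigAux.p0_eq_one hmul
  intro n hn
  rw [SigAux.odd_eq h0 hmul hz2 n hn, mul_pow, SigAux.p3_sq h0 hmul hz2]

end
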